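/- For $k \ge 1$, $N_{(2,1)}(k) = \sum_{(a_1,a_2,b) \in S_{(2,1)}(k)} f(b-a_1+k,\, b-a_2+k,\, 2b+k+1)$ equals $\sum_{b=\lceil -(k+1)/2 \rceil}^{-1} \lfloor -(b+1)/2 \rfloor (k+2b+2)(k+2b+3) + \tfrac{1}{2}\sum_{a=0}^{\lfloor (k-3)/4 \rfloor}(k-4a-2)(k-4a-1)$. -/

import Mathlib

/-- `f(n,m,r)`: the (half-)count of pairs of monomials of degrees `n, m` with
`deg gcd ≤ r`; equal to `(r+1)(r+2)` if `0 ≤ r < min n m` and `n ≠ m`, to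
`(r+1)(r+2)/2` if `0 ≤ r < n = m`, and to `0` if `r < 0`. -/
noncomputable def fcount (n m r : ℤ) : ℚ :=
  if 0 ≤ r ∧ r < min n m then
    (if n = m then (((r+1) * (r+2) : ℤ) : ℚ) / 2 else (((r+1) * (r+2) : ℤ) : ℚ))
  else 0

/-- Inner fiber sum: for `s ≥ 0`,
`∑_{j=0}^{⌊s/2⌋} (½ if 2j=s else 1)·c = (s+1)/2 · c`. -/
lemma inner_fiber (s : ℤ) (hs : 0 ≤ s) (c : ℚ) :
    ∑ j ∈ Finset.Icc (0:ℤ) (s/2), (if 2*j = s then (1:ℚ)/2 else 1) * c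
      = ((s:ℚ)+1)/2 * c := by
  rcases Int.even_or_odd s with ⟨u, hu⟩ | ⟨u, hu⟩
  · have hu0 : 0 ≤ u := by omega
    have h2 : s/2 = u := by omega
    rw [h2]
    have hcongr : ∀ j ∈ Finset.Icc (0:ℤ) u,
        (if 2*j = s then (1:ℚ)/2 else 1) * c = c + (if j = u then -(c/2) else 0) := by
      intro j hj
      by_cases hju : j = u
      · rw [if_pos (by omega), if_pos hju]; ring
      · rw [if_neg (by omega), if_neg hju]; ring
    rw [Finset.sum_congr rfl hcongr, Finset.sum_add_distrib, Finset.sum_const,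
      Finset.sum_ite_eq' (Finset.Icc (0:ℤ) u) u (fun _ => -(c/2)),
      if_pos (by simp [hu0] : u ∈ Finset.Icc (0:ℤ) u)]
    rw [Int.card_Icc]
    have : ((u + 1 - 0).toNat : ℚ) = (u:ℚ) + 1 := by
      rw [show ((u + 1 - 0).toNat : ℚ) = (((u + 1 - 0).toNat : ℤ) : ℚ) by push_cast; ring]
      rw [Int.toNat_of_nonneg (by omega)]; push_cast; ring
    rw [nsmul_eq_mul, this]
    have hsq : (s:ℚ) = (u:ℚ) + (u:ℚ) := by exact_mod_cast congrArg (Int.cast : ℤ → ℚ) hu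
    rw [hsq]; ring
  · have hu0 : 0 ≤ u := by omega
    have h2 : s/2 = u := by omega
    rw [h2]
    have hcongr : ∀ j ∈ Finset.Icc (0:ℤ) u,
        (if 2*j = s then (1:ℚ)/2 else 1) * c = c := by
      intro j hj
      rw [if_neg (by omega)]; ring
    rw [Finset.sum_congr rfl hcongr, Finset.sum_const, Int.card_Icc]
    have : ((u + 1 - 0).toNat : ℚ) = (u:ℚ) + 1 := by
      rw [show ((u + 1 - 0).toNat : ℚ) = (((u + 1 - 0).toNat : ℤ) : ℚ) by push_cast; ring]
      rw [Int.toNat_of_nonneg (by omega)]; push_cast; ring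
    rw [nsmul_eq_mul, this]
    have hsq : (s:ℚ) = 2*(u:ℚ) + 1 := by exact_mod_cast congrArg (Int.cast : ℤ → ℚ) hu
    rw [hsq]; ring

/-- For `k ≥ 1`,
`N_{(2,1)}(k) = ∑_{(a₁,a₂,b) ∈ S_{(2,1)}(k), a₁ ≥ a₂} f(b-a₁+k, b-a₂+k, 2b+k+1)`
equals
`∑_{b=⌈-(k+1)/2⌉}^{-1} ⌊-(b+1)/2⌋(k+2b+2)(k+2b+3) + ½∑_{a=0}^{⌊(k-3)/4⌋}(k-4a-2)(k-4a-1)`.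
Here a triple `(a₁,a₂,b) ∈ S_{(2,1)}(k)` (with `a₁+a₂+b = -2`, `0 ≤ aᵢ ≤ b+k`,
`a₁ ≥ a₂`) is parametrized by the pair `(a₁,a₂)`, with `b = -2-a₁-a₂`. -/
theorem stmt7 (k : ℤ) (hk : 1 ≤ k) :
    (∑ p ∈ ((Finset.Icc (0:ℤ) k) ×ˢ (Finset.Icc (0:ℤ) k)).filter
        (fun p => p.2 ≤ p.1 ∧ p.1 ≤ (-2 - p.1 - p.2) + k ∧ p.2 ≤ (-2 - p.1 - p.2) + k),
      fcount ((-2 - p.1 - p.2) - p.1 + k) ((-2 - p.1 - p.2) - p.2 + k)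
        (2 * (-2 - p.1 - p.2) + k + 1))
    = (∑ b ∈ Finset.Icc (-((k+1)/2)) (-1 : ℤ),
        ((((-(b+1))/2) * (k+2*b+2) * (k+2*b+3) : ℤ) : ℚ)) +
      (1/2) * ∑ a ∈ Finset.Icc (0 : ℤ) ((k-3)/4),
        (((k-4*a-2) * (k-4*a-1) : ℤ) : ℚ) := by
  -- Common middle expression
  have key : ∀ x : ℤ × ℤ, x ∈ ((Finset.Icc (0:ℤ) k) ×ˢ (Finset.Icc (0:ℤ) k)) → True := by
    intro _ _; trivial
  clear key
  -- Step 1: shrink the LHS index set to where `fcount` is nonzero.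
  have h1 : (∑ p ∈ ((Finset.Icc (0:ℤ) k) ×ˢ (Finset.Icc (0:ℤ) k)).filter
        (fun p => p.2 ≤ p.1 ∧ p.1 ≤ (-2 - p.1 - p.2) + k ∧ p.2 ≤ (-2 - p.1 - p.2) + k),
      fcount ((-2 - p.1 - p.2) - p.1 + k) ((-2 - p.1 - p.2) - p.2 + k)
        (2 * (-2 - p.1 - p.2) + k + 1))
      = ∑ p ∈ ((Finset.Icc (0:ℤ) k) ×ˢ (Finset.Icc (0:ℤ) k)).filter
        (fun p => p.2 ≤ p.1 ∧ 2*p.1 + 2*p.2 ≤ k - 3),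
      fcount ((-2 - p.1 - p.2) - p.1 + k) ((-2 - p.1 - p.2) - p.2 + k)
        (2 * (-2 - p.1 - p.2) + k + 1) := by
    refine (Finset.sum_subset ?_ ?_).symm
    · intro p hp
      simp only [Finset.mem_filter, Finset.mem_product, Finset.mem_Icc] at hp ⊢
      omega
    · intro p hp hnp
      simp only [Finset.mem_filter, Finset.mem_product, Finset.mem_Icc] at hp hnp
      rw [fcount, if_neg]
      rintro ⟨h0, -⟩
      omega
  rw [h1]; clear h1
  -- Step 2: evaluate `fcount` on this set.
  have h2 : (∑ p ∈ ((Finset.Icc (0:ℤ) k) ×ˢ (Finset.Icc (0:ℤ) k)).filter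
        (fun p => p.2 ≤ p.1 ∧ 2*p.1 + 2*p.2 ≤ k - 3),
      fcount ((-2 - p.1 - p.2) - p.1 + k) ((-2 - p.1 - p.2) - p.2 + k)
        (2 * (-2 - p.1 - p.2) + k + 1))
      = ∑ p ∈ ((Finset.Icc (0:ℤ) k) ×ˢ (Finset.Icc (0:ℤ) k)).filter
        (fun p => p.2 ≤ p.1 ∧ 2*p.1 + 2*p.2 ≤ k - 3),
      (if p.1 = p.2 then (1:ℚ)/2 else 1) *
        (((k-2-2*(p.1+p.2)) * (k-1-2*(p.1+p.2)) : ℤ) : ℚ) := by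
    refine Finset.sum_congr rfl ?_
    intro p hp
    simp only [Finset.mem_filter, Finset.mem_product, Finset.mem_Icc] at hp
    have hmin : min ((-2 - p.1 - p.2) - p.1 + k) ((-2 - p.1 - p.2) - p.2 + k)
        = (-2 - p.1 - p.2) - p.1 + k := min_eq_left (by omega)
    rw [fcount, hmin, if_pos ⟨by omega, by omega⟩]
    have hX : (((2 * (-2 - p.1 - p.2) + k + 1 + 1) * (2 * (-2 - p.1 - p.2) + k + 1 + 2) : ℤ) : ℚ)
        = (((k-2-2*(p.1+p.2)) * (k-1-2*(p.1+p.2)) : ℤ) : ℚ) := by push_cast; ring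
    by_cases hab : p.1 = p.2
    · rw [if_pos (by omega), if_pos hab, hX]; ring
    · rw [if_neg (by omega), if_neg hab, hX]; ring
  rw [h2]; clear h2
  -- Step 3: reindex by `(s, j) = (a₁+a₂, a₂)`.
  have h3 : (∑ p ∈ ((Finset.Icc (0:ℤ) k) ×ˢ (Finset.Icc (0:ℤ) k)).filter
        (fun p => p.2 ≤ p.1 ∧ 2*p.1 + 2*p.2 ≤ k - 3),
      (if p.1 = p.2 then (1:ℚ)/2 else 1) *
        (((k-2-2*(p.1+p.2)) * (k-1-2*(p.1+p.2)) : ℤ) : ℚ))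
      = ∑ q ∈ ((Finset.Icc (0:ℤ) ((k-3)/2)) ×ˢ (Finset.Icc (0:ℤ) ((k-3)/4))).filter
        (fun q => 2*q.2 ≤ q.1),
      (if 2*q.2 = q.1 then (1:ℚ)/2 else 1) *
        (((k-2-2*q.1) * (k-1-2*q.1) : ℤ) : ℚ) := by
    refine Finset.sum_nbij' (fun p => (p.1 + p.2, p.2)) (fun q => (q.1 - q.2, q.2)) ?_ ?_ ?_ ?_ ?_
    · intro p hp
      beta_reduce
      simp only [Finset.mem_filter, Finset.mem_product, Finset.mem_Icc] at hp ⊢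
      omega
    · intro q hq
      beta_reduce
      simp only [Finset.mem_filter, Finset.mem_product, Finset.mem_Icc] at hq ⊢
      omega
    · intro p _; simp
    · intro q _; simp
    · intro p hp
      beta_reduce
      simp only [Finset.mem_filter, Finset.mem_product, Finset.mem_Icc] at hp
      by_cases hab : p.1 = p.2
      · rw [if_pos hab, if_pos (by omega)]
      · rw [if_neg hab, if_neg (by omega)]
  rw [h3]; clear h3
  -- Step 4: turn the filtered product sum into an iterated sum and apply `inner_fiber`.
  have h4 : (∑ q ∈ ((Finset.Icc (0:ℤ) ((k-3)/2)) ×ˢ (Finset.Icc (0:ℤ) ((k-3)/4))).filter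
        (fun q => 2*q.2 ≤ q.1),
      (if 2*q.2 = q.1 then (1:ℚ)/2 else 1) *
        (((k-2-2*q.1) * (k-1-2*q.1) : ℤ) : ℚ))
      = ∑ s ∈ Finset.Icc (0:ℤ) ((k-3)/2),
          ((s:ℚ)+1)/2 * (((k-2-2*s) * (k-1-2*s) : ℤ) : ℚ) := by
    rw [Finset.sum_filter, Finset.sum_product]
    refine Finset.sum_congr rfl ?_
    intro s hs
    simp only [Finset.mem_Icc] at hs
    have hset : (Finset.Icc (0:ℤ) ((k-3)/4)).filter (fun j => 2*j ≤ s)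
        = Finset.Icc (0:ℤ) (s/2) := by
      ext j
      simp only [Finset.mem_filter, Finset.mem_Icc]
      omega
    calc (∑ j ∈ Finset.Icc (0:ℤ) ((k-3)/4),
            if 2*j ≤ s then
              (if 2*j = s then (1:ℚ)/2 else 1) * (((k-2-2*s) * (k-1-2*s) : ℤ) : ℚ)
            else 0)
        = ∑ j ∈ (Finset.Icc (0:ℤ) ((k-3)/4)).filter (fun j => 2*j ≤ s),
            (if 2*j = s then (1:ℚ)/2 else 1) * (((k-2-2*s) * (k-1-2*s) : ℤ) : ℚ) := by
          rw [Finset.sum_filter]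
      _ = ∑ j ∈ Finset.Icc (0:ℤ) (s/2),
            (if 2*j = s then (1:ℚ)/2 else 1) * (((k-2-2*s) * (k-1-2*s) : ℤ) : ℚ) := by
          rw [hset]
      _ = ((s:ℚ)+1)/2 * (((k-2-2*s) * (k-1-2*s) : ℤ) : ℚ) := inner_fiber s hs.1 _
  rw [h4]; clear h4
  -- Step 5: reindex the LHS-reduced sum onto `Icc 1 M` with `t = s+1`, then to `Icc 0 M`.
  have h5 : (∑ s ∈ Finset.Icc (0:ℤ) ((k-3)/2),
          ((s:ℚ)+1)/2 * (((k-2-2*s) * (k-1-2*s) : ℤ) : ℚ))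
      = ∑ t ∈ Finset.Icc (1:ℤ) ((k-1)/2),
          (t:ℚ)/2 * (((k-2*t) * (k+1-2*t) : ℤ) : ℚ) := by
    refine Finset.sum_nbij' (fun s => s + 1) (fun t => t - 1) ?_ ?_ ?_ ?_ ?_
    · intro s hs; simp only [Finset.mem_Icc] at hs ⊢; omega
    · intro t ht; simp only [Finset.mem_Icc] at ht ⊢; omega
    · intro s _; ring
    · intro t _; ring
    · intro s _
      push_cast
      ring
  rw [h5]; clear h5
  have h6 : (∑ t ∈ Finset.Icc (1:ℤ) ((k-1)/2),
          (t:ℚ)/2 * (((k-2*t) * (k+1-2*t) : ℤ) : ℚ))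
      = ∑ t ∈ Finset.Icc (0:ℤ) ((k-1)/2),
          (t:ℚ)/2 * (((k-2*t) * (k+1-2*t) : ℤ) : ℚ) := by
    refine Finset.sum_subset ?_ ?_
    · intro t ht; simp only [Finset.mem_Icc] at ht ⊢; omega
    · intro t ht hnt
      simp only [Finset.mem_Icc] at ht hnt
      have : t = 0 := by omega
      simp [this]
  rw [h6]; clear h6
  -- Now transform the RHS.
  have r1 : (∑ b ∈ Finset.Icc (-((k+1)/2)) (-1 : ℤ),
        ((((-(b+1))/2) * (k+2*b+2) * (k+2*b+3) : ℤ) : ℚ))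
      = ∑ t ∈ Finset.Icc (0:ℤ) ((k-1)/2),
          (((t/2) * (k-2*t) * (k+1-2*t) : ℤ) : ℚ) := by
    refine Finset.sum_nbij' (fun b => -1 - b) (fun t => -1 - t) ?_ ?_ ?_ ?_ ?_
    · intro b hb; simp only [Finset.mem_Icc] at hb ⊢; omega
    · intro t ht; simp only [Finset.mem_Icc] at ht ⊢; omega
    · intro b _; ring
    · intro t _; ring
    · intro b _
      have hd : -(b+1) = -1 - b := by ring
      rw [hd]
      push_cast
      ring
  rw [r1]; clear r1
  have r2 : (∑ a ∈ Finset.Icc (0 : ℤ) ((k-3)/4),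
        (((k-4*a-2) * (k-4*a-1) : ℤ) : ℚ))
      = ∑ t ∈ (Finset.Icc (0:ℤ) ((k-1)/2)).filter (fun t => t % 2 = 1),
          (((k-2*t) * (k+1-2*t) : ℤ) : ℚ) := by
    refine Finset.sum_nbij' (fun a => 2*a + 1) (fun t => (t-1)/2) ?_ ?_ ?_ ?_ ?_
    · intro a ha; beta_reduce; simp only [Finset.mem_Icc, Finset.mem_filter] at ha ⊢; omega
    · intro t ht; beta_reduce; simp only [Finset.mem_Icc, Finset.mem_filter] at ht ⊢; omega
    · intro a _; beta_reduce; omega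
    · intro t ht
      simp only [Finset.mem_Icc, Finset.mem_filter] at ht; beta_reduce; omega
    · intro a _
      push_cast
      ring
  rw [r2]; clear r2
  rw [Finset.mul_sum, Finset.sum_filter, ← Finset.sum_add_distrib]
  refine Finset.sum_congr rfl ?_
  intro t ht
  simp only [Finset.mem_Icc] at ht
  rcases Int.even_or_odd t with ⟨u, hu⟩ | ⟨u, hu⟩
  · have h2 : t/2 = u := by omega
    rw [h2, if_neg (by omega), hu]
    push_cast
    ring
  · have h2 : t/2 = u := by omega
    rw [h2, if_pos (by omega), hu]
    push_cast
    ring
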